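/- For every node w ∈ V_c* (the set of nodes whose core number increases after an edge insertion), the new count cnt(w, G') = |{x ∈ nbr(w, G') : core(x, G') ≥ core(w, G')}| equals cnt*(w) = |{x ∈ nbr(w, G') : core(x, G) > c_old or x ∈ V_c*}|. -/

import Mathlib

set_option linter.unusedSectionVars false
set_option linter.unusedVariables false



variable {V : Type*} [Fintype V]

/-- The k-core of `G`, as the set of vertices contained in some subgraph
(vertex set) in which every vertex has at least `k` neighbors inside the set. -/
def coreSet (G : SimpleGraph V) (k : ℕ) : Set V :=
  {v | ∃ S : Set V, v ∈ S ∧ ∀ u ∈ S, k ≤ (S ∩ G.neighborSet u).ncard}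

/-- The core number of `v`: the largest `k` such that `v` belongs to the `k`-core. -/
noncomputable def coreNumber (G : SimpleGraph V) (v : V) : ℕ :=
  sSup {k | v ∈ coreSet G k}

/-- `cnt(w, H)` : number of neighbors of `w` in `H` whose core number is at least that of `w`. -/
noncomputable def cnt (G : SimpleGraph V) (w : V) : ℕ :=
  {x ∈ G.neighborSet w | coreNumber G w ≤ coreNumber G x}.ncard

lemma mem_coreSet_zero (G : SimpleGraph V) (x : V) : x ∈ coreSet G 0 :=
  ⟨{x}, rfl, fun _ _ => Nat.zero_le _⟩

lemma coreSet_anti (G : SimpleGraph V) {k k' : ℕ} (h : k ≤ k') :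
    coreSet G k' ⊆ coreSet G k := fun v ⟨S, hv, hS⟩ =>
  ⟨S, hv, fun w hw => h.trans (hS w hw)⟩

lemma bddAbove_coreSets (G : SimpleGraph V) (x : V) :
    BddAbove {k | x ∈ coreSet G k} := by
  refine ⟨Fintype.card V, fun k hk => ?_⟩
  obtain ⟨S, hv, hS⟩ := hk
  exact (hS x hv).trans ((Set.ncard_le_ncard (Set.inter_subset_left) S.toFinite).trans
    (by simpa [Set.ncard_univ] using Set.ncard_le_ncard (Set.subset_univ S) Set.finite_univ))

lemma mem_coreSet_coreNumber (G : SimpleGraph V) (x : V) :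
    x ∈ coreSet G (coreNumber G x) :=
  Nat.sSup_mem ⟨0, mem_coreSet_zero G x⟩ (bddAbove_coreSets G x)

lemma le_coreNumber {G : SimpleGraph V} {x : V} {k : ℕ} (h : x ∈ coreSet G k) :
    k ≤ coreNumber G x := le_csSup (bddAbove_coreSets G x) h

lemma mem_coreSet_of_le {G : SimpleGraph V} {x : V} {k : ℕ} (h : k ≤ coreNumber G x) :
    x ∈ coreSet G k := coreSet_anti G h (mem_coreSet_coreNumber G x)

lemma coreSet_witness (G : SimpleGraph V) (k : ℕ) :
    ∀ w ∈ coreSet G k, k ≤ (coreSet G k ∩ G.neighborSet w).ncard := by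
  intro w hw
  obtain ⟨S, hv, hS⟩ := hw
  refine (hS w hv).trans (Set.ncard_le_ncard ?_ (Set.toFinite _))
  exact Set.inter_subset_inter_left _ (fun y hy => ⟨S, hy, hS⟩)

lemma coreNumber_mono {G G' : SimpleGraph V} (h : G ≤ G') (x : V) :
    coreNumber G x ≤ coreNumber G' x := by
  refine le_coreNumber ?_
  obtain ⟨S, hv, hS⟩ := mem_coreSet_coreNumber G x
  exact ⟨S, hv, fun w hw => (hS w hw).trans (Set.ncard_le_ncard
    (Set.inter_subset_inter_right _ (fun y hy => h hy)) (Set.toFinite _))⟩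

section edge
variable {G G' : SimpleGraph V} {u v : V}

lemma adj'_cases (hG' : G' = G ⊔ SimpleGraph.fromEdgeSet {s(u, v)}) {a b : V}
    (h : G'.Adj a b) (hn : ¬ G.Adj a b) : (a = u ∧ b = v) ∨ (a = v ∧ b = u) := by
  subst hG'
  rcases h with h | h
  · exact absurd h hn
  · rw [SimpleGraph.fromEdgeSet_adj] at h
    have := h.1
    simp only [Set.mem_singleton_iff, Sym2.eq, Sym2.rel_iff', Prod.mk.injEq, Prod.swap_prod_mk] at this
    tauto

lemma ncard_inter_nbr_le (hG' : G' = G ⊔ SimpleGraph.fromEdgeSet {s(u, v)})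
    (C : Set V) (w : V) :
    (C ∩ G'.neighborSet w).ncard ≤ (C ∩ G.neighborSet w).ncard + 1 := by
  classical
  have hsub : C ∩ G'.neighborSet w ⊆ insert (if w = u then v else u) (C ∩ G.neighborSet w) := by
    intro y ⟨hyC, hy⟩
    by_cases hadj : G.Adj w y
    · exact Set.mem_insert_of_mem _ ⟨hyC, hadj⟩
    · rcases adj'_cases hG' hy hadj with ⟨h1, h2⟩ | ⟨h1, h2⟩
      · rw [h1, h2]; simp
      · have hwu : w ≠ u := fun h => (SimpleGraph.Adj.ne (hy : G'.Adj w y)) (h.trans h2.symm)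
        rw [h1, h2, if_neg (h1 ▸ hwu)]
        exact Or.inl rfl
  exact (Set.ncard_le_ncard hsub (Set.toFinite _)).trans (Set.ncard_insert_le _ _)

lemma coreNumber_le_succ (hG' : G' = G ⊔ SimpleGraph.fromEdgeSet {s(u, v)}) (x : V) :
    coreNumber G' x ≤ coreNumber G x + 1 := by
  set K := coreNumber G' x with hK
  have hx : x ∈ coreSet G (K - 1) := by
    refine ⟨coreSet G' K, mem_coreSet_coreNumber G' x, fun w hw => ?_⟩
    have h1 := coreSet_witness G' K w hw
    have h2 := ncard_inter_nbr_le hG' (coreSet G' K) w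
    omega
  have := le_coreNumber hx
  omega

end edge

section claims
variable {G G' : SimpleGraph V} {u v : V}

/-- Claim A: if some vertex's core number increased, both endpoints of the
new edge lie in the `(coreNumber G' x)`-core of `G'`. -/
lemma endpoints_mem (hG' : G' = G ⊔ SimpleGraph.fromEdgeSet {s(u, v)}) {x : V}
    (hx : coreNumber G x < coreNumber G' x) :
    u ∈ coreSet G' (coreNumber G' x) ∧ v ∈ coreSet G' (coreNumber G' x) := by
  set K := coreNumber G' x with hK
  by_contra hcon
  have key : ∀ w ∈ coreSet G' K, coreSet G' K ∩ G'.neighborSet w ⊆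
      coreSet G' K ∩ G.neighborSet w := by
    intro w hw y ⟨hyC, hy⟩
    refine ⟨hyC, ?_⟩
    by_contra hadj
    rcases adj'_cases hG' hy hadj with ⟨h1, h2⟩ | ⟨h1, h2⟩
    · exact hcon ⟨h1 ▸ hw, h2 ▸ hyC⟩
    · exact hcon ⟨h2 ▸ hyC, h1 ▸ hw⟩
  have hxc : x ∈ coreSet G K := by
    refine ⟨coreSet G' K, mem_coreSet_coreNumber G' x, fun w hw => ?_⟩
    exact (coreSet_witness G' K w hw).trans
      (Set.ncard_le_ncard (key w hw) (Set.toFinite _))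
  exact absurd (le_coreNumber hxc) (by omega)

/-- Claim B: any vertex whose core number increases has old core number equal
to that of `u` (the endpoint with smaller core number). -/
lemma changed_core_eq (hG' : G' = G ⊔ SimpleGraph.fromEdgeSet {s(u, v)})
    (hle : coreNumber G u ≤ coreNumber G v) {x : V}
    (hx : coreNumber G x < coreNumber G' x) :
    coreNumber G x = coreNumber G u := by
  set k := coreNumber G x with hk
  have hK1 : coreNumber G' x = k + 1 := by
    have := coreNumber_le_succ hG' x; omega
  obtain ⟨huC, hvC⟩ := endpoints_mem hG' hx
  -- core number of u in G is at least k
  have hu_ge : k ≤ coreNumber G u := by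
    have h1 : k + 1 ≤ coreNumber G' u := hK1 ▸ le_coreNumber huC
    have h2 := coreNumber_le_succ hG' u
    omega
  -- suppose k < coreNumber G u, derive contradiction
  by_contra hne
  have hlt : k + 1 ≤ coreNumber G u := by omega
  set D := coreSet G (k + 1) ∪ coreSet G' (k + 1) with hD
  have hwit : ∀ w ∈ D, k + 1 ≤ (D ∩ G.neighborSet w).ncard := by
    intro w hw
    by_cases hw1 : w ∈ coreSet G (k + 1)
    · exact (coreSet_witness G (k + 1) w hw1).trans (Set.ncard_le_ncard
        (Set.inter_subset_inter_left _ Set.subset_union_left) (Set.toFinite _))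
    · have hw2 : w ∈ coreSet G' (k + 1) := hw.resolve_left hw1
      have hwu : w ≠ u := fun h => hw1 (h ▸ mem_coreSet_of_le hlt)
      have hwv : w ≠ v := fun h => hw1 (h ▸ mem_coreSet_of_le (hlt.trans hle))
      have hsub : coreSet G' (k + 1) ∩ G'.neighborSet w ⊆ D ∩ G.neighborSet w := by
        intro y ⟨hyC, hy⟩
        refine ⟨Or.inr hyC, ?_⟩
        by_contra hadj
        rcases adj'_cases hG' hy hadj with ⟨h1, _⟩ | ⟨h1, _⟩
        · exact hwu h1
        · exact hwv h1
      exact (coreSet_witness G' (k + 1) w hw2).trans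
        (Set.ncard_le_ncard hsub (Set.toFinite _))
  have hxD : x ∈ coreSet G (k + 1) :=
    ⟨D, Or.inr (hK1 ▸ mem_coreSet_coreNumber G' x), hwit⟩
  exact absurd (le_coreNumber hxD) (by omega)

end claims

section claimC
variable {G G' : SimpleGraph V} {u v : V}

/-- Claim C: a vertex whose core number increases is reachable from `u`
through vertices of old core number `coreNumber G u`. -/
lemma changed_reachable (hG' : G' = G ⊔ SimpleGraph.fromEdgeSet {s(u, v)})
    (hle : coreNumber G u ≤ coreNumber G v) {x : V}
    (hx : coreNumber G x < coreNumber G' x) :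
    Relation.ReflTransGen
      (fun a b => G'.Adj a b ∧ coreNumber G a = coreNumber G u ∧ coreNumber G b = coreNumber G u)
      u x := by
  set c := coreNumber G u with hc
  set r := fun a b => G'.Adj a b ∧ coreNumber G a = c ∧ coreNumber G b = c with hr
  have hrsymm : Symmetric r := fun a b ⟨h1, h2, h3⟩ => ⟨h1.symm, h3, h2⟩
  have hxc : coreNumber G x = c := changed_core_eq hG' hle hx
  have hK1 : coreNumber G' x = c + 1 := by
    have := coreNumber_le_succ hG' x; omega
  set T := {y | Relation.ReflTransGen r x y} with hT
  have hTcore : ∀ y ∈ T, coreNumber G y = c := by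
    intro y hy
    induction hy with
    | refl => exact hxc
    | tail _ h _ => exact h.2.2
  by_contra hcon
  have huT : u ∉ T := fun h => hcon (by haveI : Std.Symm r := ⟨fun a b hab => hrsymm hab⟩; exact (Relation.ReflTransGen.symmetric : Std.Symm (Relation.ReflTransGen r)).symm _ _ h)
  set C' := coreSet G' (c + 1) with hC'
  set D := coreSet G (c + 1) ∪ (T ∩ C') with hD
  have hwit : ∀ w ∈ D, c + 1 ≤ (D ∩ G.neighborSet w).ncard := by
    intro w hw
    by_cases hw1 : w ∈ coreSet G (c + 1)
    · exact (coreSet_witness G (c + 1) w hw1).trans (Set.ncard_le_ncard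
        (Set.inter_subset_inter_left _ Set.subset_union_left) (Set.toFinite _))
    · obtain ⟨hwT, hwC⟩ := hw.resolve_left hw1
      have hwc : coreNumber G w = c := hTcore w hwT
      have hwu : w ≠ u := fun h => huT (h ▸ hwT)
      have hsub : C' ∩ G'.neighborSet w ⊆ D ∩ G.neighborSet w := by
        intro y ⟨hyC, hy⟩
        have hyge : c ≤ coreNumber G y := by
          have h1 : c + 1 ≤ coreNumber G' y := le_coreNumber hyC
          have h2 := coreNumber_le_succ hG' y
          omega
        by_cases hyc : coreNumber G y = c
        · -- y is in T
          have hyT : y ∈ T := Relation.ReflTransGen.tail hwT ⟨hy, hwc, hyc⟩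
          refine ⟨Or.inr ⟨hyT, hyC⟩, ?_⟩
          by_contra hadj
          rcases adj'_cases hG' hy hadj with ⟨h1, _⟩ | ⟨h1, h2⟩
          · exact hwu h1
          · -- w = v, y = u : then u ∈ T, contradiction
            exact huT (h2 ▸ hyT)
        · -- coreNumber G y ≥ c+1
          have hyD : y ∈ coreSet G (c + 1) := mem_coreSet_of_le (by omega)
          refine ⟨Or.inl hyD, ?_⟩
          by_contra hadj
          rcases adj'_cases hG' hy hadj with ⟨h1, _⟩ | ⟨h1, h2⟩
          · exact hwu h1
          · exact hyc (h2 ▸ hc.symm ▸ rfl)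
      exact (coreSet_witness G' (c + 1) w hwC).trans
        (Set.ncard_le_ncard hsub (Set.toFinite _))
  have hxD : x ∈ coreSet G (c + 1) :=
    ⟨D, Or.inr ⟨Relation.ReflTransGen.refl, by rw [hC', ← hK1]; exact mem_coreSet_coreNumber G' x⟩, hwit⟩
  exact absurd (le_coreNumber hxD) (by omega)

end claimC

theorem stmt18 (G : SimpleGraph V) (u v : V) (huv : u ≠ v) (hnadj : ¬ G.Adj u v)
    (hle : coreNumber G u ≤ coreNumber G v)
    (G' : SimpleGraph V) (hG' : G' = G ⊔ SimpleGraph.fromEdgeSet {s(u, v)})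
    (Vc : Set V)
    (hVc : Vc = {w | Relation.ReflTransGen
      (fun a b => G'.Adj a b ∧ coreNumber G a = coreNumber G u ∧ coreNumber G b = coreNumber G u)
      u w})
    (Vcs : Set V) (hVcs : Vcs = {w ∈ Vc | coreNumber G' w = coreNumber G u + 1}) :
    ∀ w ∈ Vcs, cnt G' w =
      {x ∈ G'.neighborSet w | coreNumber G u < coreNumber G x ∨ x ∈ Vcs}.ncard := by
  have hGle : G ≤ G' := hG' ▸ le_sup_left
  set c := coreNumber G u with hc
  intro w hw
  rw [hVcs] at hw
  obtain ⟨hwVc, hwK⟩ := hw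
  unfold cnt
  congr 1
  ext x
  simp only [Set.mem_setOf_eq, hwK]
  constructor
  · rintro ⟨hadj, hge⟩
    refine ⟨hadj, ?_⟩
    by_cases hxc : c < coreNumber G x
    · exact Or.inl hxc
    · right
      have hchanged : coreNumber G x < coreNumber G' x := by omega
      have hxeq : coreNumber G x = c := changed_core_eq hG' hle hchanged
      have hx' : coreNumber G' x = c + 1 := by
        have := coreNumber_le_succ hG' x; omega
      rw [hVcs]
      exact ⟨hVc ▸ changed_reachable hG' hle hchanged, hx'⟩
  · rintro ⟨hadj, hor | hmem⟩
    · refine ⟨hadj, ?_⟩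
      have := coreNumber_mono hGle x
      omega
    · rw [hVcs] at hmem
      exact ⟨hadj, hmem.2.ge⟩
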